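/- Let g : ℝ → ℝ be three times continuously differentiable on a neighborhood of l with g(l) = 0 and g'(l) ≠ 0. Define Ψ(x) = x - g(x)/g'(l) + g(x)²·g''(l)/(2·g'(l)³). Then Ψ(l) = l, Ψ'(l) = 0, and Ψ''(l) = 0. -/

import Mathlib

theorem stmt_4 (g : ℝ → ℝ) (l : ℝ) (hg : ContDiffAt ℝ 3 g l)
    (hgl : g l = 0) (hg' : deriv g l ≠ 0) :
    let Ψ : ℝ → ℝ := fun x =>
      x - g x / deriv g l + g x ^ 2 * iteratedDeriv 2 g l / (2 * (deriv g l) ^ 3)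
    Ψ l = l ∧ deriv Ψ l = 0 ∧ iteratedDeriv 2 Ψ l = 0 := by
  intro Ψ
  set a := deriv g l with ha
  set c := iteratedDeriv 2 g l with hc
  set k := c / (2 * a ^ 3) with hk
  -- open neighborhood where g is C³
  obtain ⟨u, hu, hgu⟩ := hg.contDiffOn (le_refl 3) (by simp)
  obtain ⟨U, hUu, hUopen, hlU⟩ := mem_nhds_iff.mp hu
  have hgU : ContDiffOn ℝ 3 g U := hgu.mono hUu
  have hdgU : ContDiffOn ℝ 2 (deriv g) U := by
    refine hgU.deriv_of_isOpen hUopen ?_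
    norm_num
  have hgdiff : ∀ x ∈ U, DifferentiableAt ℝ g x := fun x hx =>
    (hgU.differentiableOn (by norm_num) x hx).differentiableAt (hUopen.mem_nhds hx)
  have hdgl : DifferentiableAt ℝ (deriv g) l :=
    ((hdgU.differentiableOn (by norm_num)) l hlU).differentiableAt (hUopen.mem_nhds hlU)
  have hc2 : deriv (deriv g) l = c := by
    rw [hc, iteratedDeriv_succ, iteratedDeriv_one]
  -- derivative of Ψ at points where g is differentiable
  have key : ∀ x, DifferentiableAt ℝ g x →
      HasDerivAt Ψ (1 - deriv g x / a + 2 * g x * deriv g x * k) x := by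
    intro x hx
    have h1 : HasDerivAt (fun y => y - g y / a) (1 - deriv g x / a) x :=
      (hasDerivAt_id x).sub (hx.hasDerivAt.div_const a)
    have h2 : HasDerivAt (fun y => g y ^ 2 * k) (2 * g x * deriv g x * k) x := by
      have : HasDerivAt (fun y => g y ^ 2 * k) (((2 : ℕ) : ℝ) * g x ^ (2 - 1) * deriv g x * k) x :=
        (hx.hasDerivAt.pow 2).mul_const k
      convert this using 1
      ring
    have h3 := h1.add h2
    have hfun : Ψ = fun y => (y - g y / a) + g y ^ 2 * k := by
      funext y
      simp only [Ψ, hk, mul_div_assoc]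
      rfl
    rw [hfun]
    exact h3
  have hΨl : Ψ l = l := by
    simp [Ψ, hgl]
  have hΨ'l : deriv Ψ l = 0 := by
    rw [(key l (hgdiff l hlU)).deriv, hgl]
    field_simp
    rw [← ha]
    ring
  refine ⟨hΨl, hΨ'l, ?_⟩
  -- second derivative
  have hΨ'eq : deriv Ψ =ᶠ[nhds l]
      fun x => 1 - deriv g x / a + 2 * g x * deriv g x * k := by
    filter_upwards [hUopen.mem_nhds hlU] with x hx
    exact (key x (hgdiff x hx)).deriv
  have hF : HasDerivAt (fun x => 1 - deriv g x / a + 2 * g x * deriv g x * k)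
      ((0 - deriv (deriv g) l / a) +
        ((2 * deriv g l) * deriv g l + (2 * g l) * deriv (deriv g) l) * k) l := by
    have h1 : HasDerivAt (fun x : ℝ => 1 - deriv g x / a)
        (0 - deriv (deriv g) l / a) l :=
      (hasDerivAt_const l 1).sub (hdgl.hasDerivAt.div_const a)
    have h2 : HasDerivAt (fun x => 2 * g x * deriv g x * k)
        (((2 * deriv g l) * deriv g l + (2 * g l) * deriv (deriv g) l) * k) l := by
      have hmul : HasDerivAt (fun x => 2 * g x * deriv g x)
          ((2 * deriv g l) * deriv g l + (2 * g l) * deriv (deriv g) l) l :=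
        (((hgdiff l hlU).hasDerivAt).const_mul 2).mul hdgl.hasDerivAt
      exact hmul.mul_const k
    exact h1.add h2
  have h2d : iteratedDeriv 2 Ψ l = deriv (deriv Ψ) l := by
    rw [iteratedDeriv_succ, iteratedDeriv_one]
  rw [h2d, hΨ'eq.deriv_eq, hF.deriv, hc2, hgl, hk]
  field_simp
  ring
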